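/- Let t ≥ 1 and let f : (Fin (2t) → ZMod 2) → ZMod 2 be a bent function (nonlinearity Nl(f) = 2^{2t−1} − 2^{t−1}) with f(0) = 0. Then the Cayley graph G_f of Z_2^{2t} with connection set the support Ω_f is a strongly regular graph with λ = μ: there exist natural numbers k and λ such that G_f satisfies IsSRGWith 2^{2t} k λ λ. -/

import Mathlib

/-- The nonlinearity of a Boolean function `f`: the minimum Hamming distance from `f`
to an affine function `x ↦ a·x + c`. -/
noncomputable def nonlinearity {n : ℕ} (f : (Fin n → ZMod 2) → ZMod 2) : ℕ :=
  sInf {d : ℕ | ∃ (a : Fin n → ZMod 2) (c : ZMod 2),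
    d = (Finset.univ.filter (fun x : Fin n → ZMod 2 =>
      f x ≠ (∑ i, a i * x i) + c)).card}

/-- The Cayley graph of `Z_2^n` with connection set the support of `f`:
distinct vertices `u`, `v` are adjacent iff `f (u + v) = 1`. -/
def cayleyGraph {n : ℕ} (f : (Fin n → ZMod 2) → ZMod 2) :
    SimpleGraph (Fin n → ZMod 2) :=
  SimpleGraph.fromRel (fun u v => f (u + v) = 1)

instance {n : ℕ} (f : (Fin n → ZMod 2) → ZMod 2) :
    DecidableRel (cayleyGraph f).Adj := fun u v =>
  inferInstanceAs (Decidable (u ≠ v ∧ (f (u + v) = 1 ∨ f (v + u) = 1)))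


namespace BentAux

def chi (b : ZMod 2) : ℤ := if b = 0 then 1 else -1

lemma chi_add (a b : ZMod 2) : chi (a + b) = chi a * chi b := by
  revert a b; decide

lemma chi_eq_ite (a b : ZMod 2) : chi (a + b) = if a = b then 1 else -1 := by
  revert a b; decide

def ip {n : ℕ} (a x : Fin n → ZMod 2) : ZMod 2 := ∑ i, a i * x i

lemma ip_add_left {n : ℕ} (a b x : Fin n → ZMod 2) :
    ip (a + b) x = ip a x + ip b x := by
  simp [ip, add_mul, Finset.sum_add_distrib]

lemma ip_add_right {n : ℕ} (a x y : Fin n → ZMod 2) :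
    ip a (x + y) = ip a x + ip a y := by
  simp [ip, mul_add, Finset.sum_add_distrib]

lemma ip_zero_right {n : ℕ} (a : Fin n → ZMod 2) : ip a 0 = 0 := by
  simp [ip]

lemma ip_single_left {n : ℕ} (i : Fin n) (y : Fin n → ZMod 2) :
    ip (Pi.single i 1) y = y i := by
  rw [ip, Finset.sum_eq_single i]
  · simp
  · intro j _ hj; simp [Pi.single_eq_of_ne hj]
  · simp

lemma add_eq_zero_iff' {n : ℕ} (x y : Fin n → ZMod 2) : x + y = 0 ↔ y = x := by
  constructor
  · intro h
    funext i
    have := congrFun h i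
    simp only [Pi.add_apply, Pi.zero_apply] at this
    revert this
    generalize x i = u; generalize y i = v
    revert u v; decide
  · rintro rfl
    funext i
    have h2 : ∀ u : ZMod 2, u + u = 0 := by decide
    simp [h2]

lemma card_V (n : ℕ) : Fintype.card (Fin n → ZMod 2) = 2 ^ n := by
  simp [Fintype.card_fun]

lemma sum_chi_ip {n : ℕ} (y : Fin n → ZMod 2) :
    ∑ a : Fin n → ZMod 2, chi (ip a y) = if y = 0 then (2 ^ n : ℤ) else 0 := by
  by_cases hy : y = 0
  · subst hy
    simp [ip_zero_right, chi, card_V]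
  · simp only [hy, if_false]
    obtain ⟨i, hi⟩ : ∃ i, y i ≠ 0 := by
      by_contra h
      push_neg at h
      exact hy (funext fun i => h i)
    have hyi : y i = 1 := by
      revert hi; generalize y i = u; revert u; decide
    have key : ∑ a : Fin n → ZMod 2, chi (ip a y)
        = ∑ a : Fin n → ZMod 2, chi (ip (a + Pi.single i 1) y) :=
      (Fintype.sum_equiv (Equiv.addRight (Pi.single i 1)) _ _ (fun a => rfl)).symm
    have flip : ∀ a : Fin n → ZMod 2, chi (ip (a + Pi.single i 1) y) = - chi (ip a y) := by
      intro a
      rw [ip_add_left, ip_single_left, hyi, chi_add]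
      simp [chi]
    rw [key]
    simp only [flip, Finset.sum_neg_distrib] at key ⊢
    linarith [key]

noncomputable def W {n : ℕ} (f : (Fin n → ZMod 2) → ZMod 2) (a : Fin n → ZMod 2) : ℤ :=
  ∑ x, chi (f x + ip a x)

lemma W_sq_chi {n : ℕ} (f : (Fin n → ZMod 2) → ZMod 2) (d : Fin n → ZMod 2) :
    ∑ a : Fin n → ZMod 2, (W f a) ^ 2 * chi (ip a d)
      = 2 ^ n * ∑ x, chi (f x + f (x + d)) := by
  have expand : ∀ a : Fin n → ZMod 2, (W f a) ^ 2 * chi (ip a d)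
      = ∑ x, ∑ y, chi (f x + f y) * chi (ip a (x + y + d)) := by
    intro a
    rw [sq, W, Finset.sum_mul_sum, Finset.sum_mul]
    refine Finset.sum_congr rfl fun x _ => ?_
    rw [Finset.sum_mul]
    refine Finset.sum_congr rfl fun y _ => ?_
    rw [ip_add_right, ip_add_right, chi_add, chi_add, chi_add, chi_add, chi_add]
    ring
  simp only [expand]
  rw [Finset.sum_comm]
  have swap2 : ∀ x : Fin n → ZMod 2,
      ∑ a : Fin n → ZMod 2, ∑ y, chi (f x + f y) * chi (ip a (x + y + d))
      = ∑ y, chi (f x + f y) * ∑ a : Fin n → ZMod 2, chi (ip a (x + y + d)) := by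
    intro x
    rw [Finset.sum_comm]
    exact Finset.sum_congr rfl fun y _ => by rw [Finset.mul_sum]
  simp only [swap2, sum_chi_ip]
  have indic : ∀ x y : Fin n → ZMod 2, (x + y + d = 0) ↔ (y = x + d) := by
    intro x y
    rw [add_assoc, add_eq_zero_iff']
    constructor
    · intro h; rw [← h, add_assoc y d d, (add_eq_zero_iff' d d).mpr rfl, add_zero]
    · intro h; rw [h]
      rw [show x + d + d = x + (d + d) from add_assoc x d d, (add_eq_zero_iff' d d).mpr rfl, add_zero]
  have : ∀ x : Fin n → ZMod 2,
      (∑ y, chi (f x + f y) * if x + y + d = 0 then (2 ^ n : ℤ) else 0)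
      = 2 ^ n * chi (f x + f (x + d)) := by
    intro x
    rw [Finset.sum_congr rfl (fun y _ => by rw [if_congr (indic x y) rfl rfl])]
    rw [Finset.sum_eq_single (x + d)]
    · simp [mul_comm]
    · intro y _ hy; simp [hy]
    · intro h; exact absurd (Finset.mem_univ _) h
  simp only [this]
  rw [← Finset.mul_sum]

end BentAux

open BentAux Finset in
theorem bent_cayleyGraph_isSRG (t : ℕ) (ht : 1 ≤ t)
    (f : (Fin (2 * t) → ZMod 2) → ZMod 2) (h0 : f 0 = 0)
    (hbent : nonlinearity f = 2 ^ (2 * t - 1) - 2 ^ (t - 1)) :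
    ∃ k lam : ℕ, (cayleyGraph f).IsSRGWith (2 ^ (2 * t)) k lam lam := by
  classical
  -- small ZMod 2 facts
  have huu : ∀ u : ZMod 2, u + u = 0 := by decide
  have hvv : ∀ v w : Fin (2 * t) → ZMod 2, v + (v + w) = w := by
    intro v w; rw [← add_assoc, (add_eq_zero_iff' v v).mpr rfl, zero_add]
  have hsum_card : ∀ (p : (Fin (2 * t) → ZMod 2) → Prop) [DecidablePred p],
      (∑ x : Fin (2 * t) → ZMod 2, if p x then (1 : ℤ) else 0) = (univ.filter p).card := by
    intro p _; rw [Finset.sum_boole]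
  -- the number of x with f x = 1
  set k : ℕ := (univ.filter fun x : Fin (2 * t) → ZMod 2 => f x = 1).card with hk_def
  set m : ℕ := 2 ^ (2 * t - 2) with hm_def
  have hm_cast : (m : ℤ) = 2 ^ (2 * t - 2) := by rw [hm_def]; push_cast; ring
  have hpow4 : (2 : ℤ) ^ (2 * t) = 4 * 2 ^ (2 * t - 2) := by
    calc (2 : ℤ) ^ (2 * t) = 2 ^ ((2 * t - 2) + 2) := by congr 1; omega
      _ = 4 * 2 ^ (2 * t - 2) := by rw [pow_add]; ring
  -- Walsh coefficients are bounded
  have hWle : ∀ a : Fin (2 * t) → ZMod 2, (W f a) ^ 2 ≤ (2 : ℤ) ^ (2 * t) := by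
    intro a
    set c1 : ℕ := (univ.filter fun x : Fin (2 * t) → ZMod 2 => f x = ip a x).card with hc1
    set c2 : ℕ := (univ.filter fun x : Fin (2 * t) → ZMod 2 => ¬ f x = ip a x).card with hc2
    have hsplit : c1 + c2 = 2 ^ (2 * t) := by
      rw [hc1, hc2, Finset.card_filter_add_card_filter_not, card_univ, card_V]
    have hMle2 : 2 ^ (2 * t - 1) - 2 ^ (t - 1) ≤ c2 := by
      rw [← hbent]
      apply Nat.sInf_le
      refine ⟨a, 0, ?_⟩
      rw [hc2]
      congr 1
      apply Finset.filter_congr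
      intro x _
      simp [ip]
    have hMle1 : 2 ^ (2 * t - 1) - 2 ^ (t - 1) ≤ c1 := by
      rw [← hbent]
      apply Nat.sInf_le
      refine ⟨a, 1, ?_⟩
      rw [hc1]
      congr 1
      apply Finset.filter_congr
      intro x _
      have : ∀ u s : ZMod 2, (u = s) ↔ ¬ (u = s + 1) := by decide
      simp only [ip, ne_eq]
      exact this (f x) _
    have hWval : W f a = (c1 : ℤ) - c2 := by
      rw [W, Finset.sum_congr rfl (fun x _ => chi_eq_ite (f x) (ip a x)),
        Finset.sum_ite, Finset.sum_const, Finset.sum_const, hc1, hc2]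
      simp [sub_eq_add_neg]
    -- cast the bounds
    have hle : 2 ^ (t - 1) ≤ 2 ^ (2 * t - 1) := Nat.pow_le_pow_right (by norm_num) (by omega)
    have hM1 : ((2 ^ (2 * t - 1) - 2 ^ (t - 1) : ℕ) : ℤ)
        = 2 ^ (2 * t - 1) - 2 ^ (t - 1) := by rw [Nat.cast_sub hle]; push_cast; ring
    have h1 : (c1 : ℤ) ≥ 2 ^ (2 * t - 1) - 2 ^ (t - 1) := by
      rw [← hM1]; exact_mod_cast hMle1
    have h2 : (c2 : ℤ) ≥ 2 ^ (2 * t - 1) - 2 ^ (t - 1) := by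
      rw [← hM1]; exact_mod_cast hMle2
    have hs : (c1 : ℤ) + c2 = 2 ^ (2 * t) := by exact_mod_cast congrArg (Nat.cast (R := ℤ)) hsplit
    have hp1 : (2 : ℤ) ^ (2 * t) = 2 * 2 ^ (2 * t - 1) := by
      calc (2 : ℤ) ^ (2 * t) = 2 ^ ((2 * t - 1) + 1) := by congr 1; omega
        _ = 2 * 2 ^ (2 * t - 1) := by rw [pow_succ]; ring
    have hp2 : (2 : ℤ) ^ t = 2 * 2 ^ (t - 1) := by
      calc (2 : ℤ) ^ t = 2 ^ ((t - 1) + 1) := by congr 1; omega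
        _ = 2 * 2 ^ (t - 1) := by rw [pow_succ]; ring
    have hb1 : W f a ≤ 2 ^ t := by rw [hWval]; linarith
    have hb2 : -(2 ^ t) ≤ W f a := by rw [hWval]; linarith
    calc (W f a) ^ 2 ≤ ((2:ℤ) ^ t) ^ 2 := sq_le_sq' hb2 hb1
      _ = 2 ^ (2 * t) := by rw [← pow_mul, mul_comm]
  -- Parseval
  have hPar : ∑ a : Fin (2 * t) → ZMod 2, (W f a) ^ 2 = (2 : ℤ) ^ (2 * t) * 2 ^ (2 * t) := by
    have hchi0 : chi 0 = 1 := rfl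
    have h1 := W_sq_chi f 0
    simp only [ip_zero_right, add_zero, huu, hchi0, mul_one] at h1
    rw [h1, Finset.sum_const, card_univ, card_V]
    simp
  -- all Walsh coefficients have square 2^(2t)
  have hWeq : ∀ a : Fin (2 * t) → ZMod 2, (W f a) ^ 2 = (2 : ℤ) ^ (2 * t) := by
    intro a
    by_contra hne
    have hlt : (W f a) ^ 2 < 2 ^ (2 * t) := lt_of_le_of_ne (hWle a) hne
    have : ∑ b : Fin (2 * t) → ZMod 2, (W f b) ^ 2 < ∑ _b : Fin (2 * t) → ZMod 2, (2 : ℤ) ^ (2 * t) :=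
      Finset.sum_lt_sum (fun b _ => hWle b) ⟨a, Finset.mem_univ a, hlt⟩
    rw [hPar, Finset.sum_const, card_univ, card_V] at this
    simp at this
  -- autocorrelation vanishes
  have hAuto : ∀ d : Fin (2 * t) → ZMod 2, d ≠ 0 → ∑ x : Fin (2 * t) → ZMod 2, chi (f x + f (x + d)) = 0 := by
    intro d hd
    have h1 := W_sq_chi f d
    rw [Finset.sum_congr rfl (fun a _ => by rw [hWeq a])] at h1
    rw [← Finset.mul_sum, sum_chi_ip, if_neg hd, mul_zero] at h1
    have h2 : (2 : ℤ) ^ (2 * t) ≠ 0 := by positivity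
    exact (mul_eq_zero.mp h1.symm).resolve_left h2
  -- the count of common-difference pairs
  have hS1 : ∑ x : Fin (2 * t) → ZMod 2, chi (f x) = 2 ^ (2 * t) - 2 * k := by
    have hchi1 : ∀ u : ZMod 2, chi u = 1 - 2 * (if u = 1 then (1:ℤ) else 0) := by decide
    rw [Finset.sum_congr rfl (fun x _ => hchi1 (f x)), Finset.sum_sub_distrib,
      ← Finset.mul_sum, hsum_card, Finset.sum_const, card_univ, card_V]
    simp [hk_def]
  have hAcount : ∀ d : Fin (2 * t) → ZMod 2, d ≠ 0 →
      (univ.filter fun x : Fin (2 * t) → ZMod 2 => f x = 1 ∧ f (x + d) = 1).card = k - m := by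
    intro d hd
    set A : ℕ := (univ.filter fun x : Fin (2 * t) → ZMod 2 => f x = 1 ∧ f (x + d) = 1).card with hA_def
    have key4 : ∀ u v : ZMod 2,
        (4:ℤ) * (if u = 1 ∧ v = 1 then 1 else 0) = 1 - chi u - chi v + chi (u + v) := by decide
    have hS2 : ∑ x : Fin (2 * t) → ZMod 2, chi (f (x + d)) = ∑ x : Fin (2 * t) → ZMod 2, chi (f x) :=
      Fintype.sum_equiv (Equiv.addRight d) _ _ (fun x => rfl)
    have h4A : 4 * (A : ℤ) = 4 * k - 2 ^ (2 * t) := by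
      have hA1 : (A : ℤ) = ∑ x : Fin (2 * t) → ZMod 2, (if f x = 1 ∧ f (x + d) = 1 then (1:ℤ) else 0) := by
        rw [hsum_card, hA_def]
      calc 4 * (A : ℤ)
          = ∑ x : Fin (2 * t) → ZMod 2, (4:ℤ) * (if f x = 1 ∧ f (x + d) = 1 then (1:ℤ) else 0) := by
            rw [hA1, Finset.mul_sum]
        _ = ∑ x : Fin (2 * t) → ZMod 2, (1 - chi (f x) - chi (f (x + d)) + chi (f x + f (x + d))) := by
            exact Finset.sum_congr rfl fun x _ => key4 _ _
        _ = 4 * k - 2 ^ (2 * t) := by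
            rw [Finset.sum_add_distrib, Finset.sum_sub_distrib, Finset.sum_sub_distrib,
              hAuto d hd, hS2, hS1, Finset.sum_const, card_univ, card_V, add_zero]
            push_cast
            ring
    have h4A' : (A : ℤ) = (k : ℤ) - m := by
      rw [hm_cast]
      linarith [h4A, hpow4]
    omega
  -- adjacency in the Cayley graph
  have hadj : ∀ u v : Fin (2 * t) → ZMod 2, (cayleyGraph f).Adj u v ↔ f (u + v) = 1 := by
    intro u v
    rw [cayleyGraph, SimpleGraph.fromRel_adj]
    constructor
    · rintro ⟨hne, h | h⟩
      · exact h
      · rwa [add_comm]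
    · intro h
      refine ⟨?_, Or.inl h⟩
      rintro rfl
      rw [(add_eq_zero_iff' _ _).mpr rfl, h0] at h
      exact absurd h (by decide)
  have hcalc1 : ∀ u v w : Fin (2 * t) → ZMod 2, (u + w) + (u + v) = v + w := by
    intro u v w; funext i
    have h3 : ∀ a b c : ZMod 2, (a + c) + (a + b) = b + c := by decide
    simp only [Pi.add_apply]
    exact h3 _ _ _
  have hcalc2 : ∀ u v x : Fin (2 * t) → ZMod 2, v + (u + x) = x + (u + v) := by
    intro u v x; funext i
    have h3 : ∀ a b c : ZMod 2, b + (a + c) = c + (a + b) := by decide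
    simp only [Pi.add_apply]
    exact h3 _ _ _
  have hcommon_card : ∀ u v : Fin (2 * t) → ZMod 2,
      Fintype.card ((cayleyGraph f).commonNeighbors u v)
        = (univ.filter fun x : Fin (2 * t) → ZMod 2 =>
            f x = 1 ∧ f (x + (u + v)) = 1).card := by
    intro u v
    have e : ((cayleyGraph f).commonNeighbors u v) ≃
        {w : Fin (2 * t) → ZMod 2 // f (u + w) = 1 ∧ f (v + w) = 1} :=
      Equiv.subtypeEquivRight (fun w => by
        rw [SimpleGraph.mem_commonNeighbors, hadj, hadj])
    rw [Fintype.card_congr e, Fintype.card_subtype]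
    apply Finset.card_nbij' (fun w => u + w) (fun x => u + x)
    · intro w hw
      simp only [Finset.mem_coe, Finset.mem_filter, Finset.mem_univ, true_and] at hw ⊢
      refine ⟨hw.1, ?_⟩
      rw [hcalc1 u v w]
      exact hw.2
    · intro x hx
      simp only [Finset.mem_coe, Finset.mem_filter, Finset.mem_univ, true_and] at hx ⊢
      refine ⟨by rw [hvv]; exact hx.1, ?_⟩
      rw [hcalc2 u v x]
      exact hx.2
    · intro w _; exact hvv u w
    · intro x _; exact hvv u x
  refine ⟨k, k - m, ?_, ?_, ?_, ?_⟩
  · exact card_V (2 * t)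
  · -- regularity
    intro v
    unfold SimpleGraph.degree
    rw [SimpleGraph.neighborFinset_eq_filter]
    rw [Finset.filter_congr (fun w _ => by rw [hadj v w] :
      ∀ w ∈ univ, (cayleyGraph f).Adj v w ↔ f (v + w) = 1)]
    rw [hk_def]
    apply Finset.card_nbij' (fun w => v + w) (fun x => v + x)
    · intro w hw; simp only [Finset.mem_coe, Finset.mem_filter, Finset.mem_univ, true_and] at hw ⊢; exact hw
    · intro x hx; simp only [Finset.mem_coe, Finset.mem_filter, Finset.mem_univ, true_and] at hx ⊢
      rwa [hvv]
    · intro w _; exact hvv v w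
    · intro x _; exact hvv v x
  · -- adjacent vertices
    intro u v huv
    have h1 : f (u + v) = 1 := (hadj u v).mp huv
    have hne : u + v ≠ 0 := by
      intro h; rw [h, h0] at h1; exact absurd h1 (by decide)
    rw [hcommon_card u v, hAcount (u + v) hne]
  · -- non-adjacent vertices
    intro u v hneuv _
    have hne : u + v ≠ 0 := by
      intro h
      exact hneuv ((add_eq_zero_iff' u v).mp h).symm
    rw [hcommon_card u v, hAcount (u + v) hne]
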